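/- Under the stated setup, for every I in the domain with Q(H(I)/N) > 0 and ∫₀^{Q(H(I)/N)} F(γ) dγ > 0, both cost functions are differentiable at I and their derivatives satisfy 0 < (C^L)'(I) < (C^VCG)'(I). In particular, the marginal cost of accuracy under the Lindahl (perfect price discrimination) procurement mechanism is everywhere strictly positive and strictly below the marginal cost under the VCG procurement mechanism. -/

import Mathlib

/-- Comparison of marginal costs: for every `I` in the domain with
`Q(H(I)/N) > 0` and `∫₀^{Q(H(I)/N)} F(γ) dγ > 0`, both the Lindahl cost
`C^L(I) = N·(∫₀^{Q(H(I)/N)} γ·f(γ) dγ)·ε(I)` and the VCG cost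
`C^VCG(I) = Q(H(I)/N)·H(I)·ε(I)` are differentiable at `I`, and their
derivatives satisfy `0 < (C^L)′(I) < (C^VCG)′(I)`. -/
theorem stmt_1 (N β k : ℝ) (hN : 0 < N)
    (hβ : 0 < β ∧ β < 1 / (1 + Real.sqrt (Real.exp 1)))
    (hk : k = 1 / 2 + Real.log (1 / β))
    (H ε : ℝ → ℝ)
    (hH : ∀ I, H I = N - (1 - I) * N / k)
    (hε : ∀ I, ε I = k / ((1 - I) * N))
    (F f Q Q' : ℝ → ℝ)
    (hFmono : StrictMonoOn F (Set.Ici 0))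
    (hFderiv : ∀ γ ∈ Set.Ici (0 : ℝ), HasDerivAt F (f γ) γ)
    (hfcont : ContinuousOn f (Set.Ici 0))
    (hF0 : F 0 = 0)
    (hQnonneg : ∀ u ∈ Set.Ioo (0 : ℝ) 1, 0 ≤ Q u)
    (hFQ : ∀ u ∈ Set.Ioo (0 : ℝ) 1, F (Q u) = u)
    (hQderiv : ∀ u ∈ Set.Ioo (0 : ℝ) 1, HasDerivAt Q (Q' u) u)
    (hQ'pos : ∀ u ∈ Set.Ioo (0 : ℝ) 1, 0 < Q' u)
    (CVCG CL : ℝ → ℝ)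
    (hCVCG : ∀ I, CVCG I = Q (H I / N) * H I * ε I)
    (hCL : ∀ I, CL I = N * (∫ γ in (0 : ℝ)..Q (H I / N), γ * f γ) * ε I)
    (I : ℝ) (hI : I ∈ Set.Ioo (0 : ℝ) 1)
    (hHI : H I / N ∈ Set.Ioo (0 : ℝ) 1)
    (hQpos : 0 < Q (H I / N))
    (hintpos : 0 < ∫ γ in (0 : ℝ)..Q (H I / N), F γ) :
    ∃ dL dV : ℝ, HasDerivAt CL dL I ∧ HasDerivAt CVCG dV I ∧
      0 < dL ∧ dL < dV := by
  obtain ⟨hβ0, hβ1⟩ := hβ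
  have hsqrt : 0 < Real.sqrt (Real.exp 1) := Real.sqrt_pos.2 (Real.exp_pos 1)
  have hβlt1 : β < 1 := lt_of_lt_of_le hβ1 (by
    rw [div_le_one (by linarith)]; linarith)
  have hkpos : 0 < k := by
    rw [hk]
    have : 0 < Real.log (1 / β) := Real.log_pos (by rw [lt_div_iff₀ hβ0]; linarith)
    linarith
  have hkne : k ≠ 0 := ne_of_gt hkpos
  have hNne : N ≠ 0 := ne_of_gt hN
  set u : ℝ := H I / N with hu
  set q : ℝ := Q u with hq
  set a : ℝ := 1 - I with ha
  have hapos : 0 < a := by rw [ha]; linarith [hI.2]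
  have hane : a ≠ 0 := ne_of_gt hapos
  have hu0 : (0 : ℝ) < u := hHI.1
  have hu1 : u < 1 := hHI.2
  have hHIu : H I = N * u := by rw [hu]; field_simp
  have hFQu : F q = u := hFQ u hHI
  have hQd : HasDerivAt Q (Q' u) u := hQderiv u hHI
  -- inverse function rule : f q * Q' u = 1
  have hfq1 : f q * Q' u = 1 := by
    have hc : HasDerivAt (F ∘ Q) (f q * Q' u) u :=
      (hFderiv q hQpos.le).comp u hQd
    have heq : (F ∘ Q) =ᶠ[nhds u] id :=
      Filter.eventuallyEq_of_mem (Ioo_mem_nhds hu0 hu1) (fun x hx => hFQ x hx)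
    have hid : HasDerivAt (F ∘ Q) 1 u :=
      (hasDerivAt_id u).congr_of_eventuallyEq heq
    exact hc.unique hid
  -- continuity facts
  have hFcont : ContinuousOn F (Set.Ici 0) :=
    fun x hx => ((hFderiv x hx).continuousAt).continuousWithinAt
  have hIccsub : Set.Icc (0 : ℝ) q ⊆ Set.Ici 0 := fun x hx => hx.1
  have hfint : IntervalIntegrable f MeasureTheory.volume 0 q :=
    (hfcont.mono hIccsub).intervalIntegrable_of_Icc hQpos.le
  set B : ℝ := ∫ γ in (0 : ℝ)..q, F γ with hB
  -- integration by parts : ∫ γ f γ = q u - B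
  have hAeq : (∫ γ in (0 : ℝ)..q, γ * f γ) = q * u - B := by
    have hparts := intervalIntegral.integral_mul_deriv_eq_deriv_mul_of_hasDerivAt
      (u := fun x : ℝ => x) (v := F) (u' := fun _ : ℝ => 1) (v' := f)
      (a := (0 : ℝ)) (b := q)
      (continuousOn_id)
      (hFcont.mono (by rw [Set.uIcc_of_le hQpos.le]; exact hIccsub))
      (fun x _ => hasDerivAt_id x)
      (fun x hx => by
        refine hFderiv x ?_
        have hmin : min (0 : ℝ) q = 0 := min_eq_left hQpos.le
        rw [hmin] at hx
        exact le_of_lt hx.1)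
      (intervalIntegrable_const)
      hfint
    rw [hparts, hFQu, hF0]
    simp only [one_mul, mul_zero, sub_zero, ← hB]
  have hBpos : 0 < B := hintpos
  -- strict bound B < q * u
  have hBlt : B < q * u := by
    have h := intervalIntegral.integral_lt_integral_of_continuousOn_of_le_of_exists_lt
      (f := F) (g := fun _ => u) hQpos (hFcont.mono hIccsub) continuousOn_const
      (fun x hx => by
        rw [← hFQu]
        exact hFmono.monotoneOn (Set.mem_Ici.2 hx.1.le) (Set.mem_Ici.2 hQpos.le) hx.2)
      ⟨0, ⟨le_refl 0, hQpos.le⟩, by rw [hF0]; exact hu0⟩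
    have h2 : (∫ _x in (0 : ℝ)..q, u) = q * u := by
      rw [intervalIntegral.integral_const, smul_eq_mul, sub_zero]
    rw [h2] at h
    exact h
  have hApos : 0 < q * u - B := by linarith
  -- FTC derivative
  have hgcont : ContinuousOn (fun γ : ℝ => γ * f γ) (Set.Ici 0) :=
    continuousOn_id.mul hfcont
  have hgint : IntervalIntegrable (fun γ : ℝ => γ * f γ) MeasureTheory.volume 0 q :=
    (hgcont.mono hIccsub).intervalIntegrable_of_Icc hQpos.le
  have hmeas : StronglyMeasurableAtFilter (fun γ : ℝ => γ * f γ) (nhds q)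
      MeasureTheory.volume :=
    ContinuousOn.stronglyMeasurableAtFilter isOpen_Ioi
      (hgcont.mono Set.Ioi_subset_Ici_self) q (Set.mem_Ioi.2 hQpos)
  have hcontq : ContinuousAt (fun γ : ℝ => γ * f γ) q :=
    hgcont.continuousAt (Filter.mem_of_superset (Ioi_mem_nhds hQpos)
      Set.Ioi_subset_Ici_self)
  have hFTC : HasDerivAt (fun x : ℝ => ∫ γ in (0 : ℝ)..x, γ * f γ) (q * f q) q :=
    intervalIntegral.integral_hasDerivAt_right hgint hmeas hcontq
  -- derivative of H and of H/N
  have hHd : HasDerivAt H (N / k) I := by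
    have h1 : HasDerivAt (fun x : ℝ => N - (1 - x) * N / k) (-(-1 * N / k)) I :=
      ((((hasDerivAt_id I).const_sub 1).mul_const N).div_const k).const_sub N
    have h2 : HasDerivAt H (-(-1 * N / k)) I :=
      h1.congr_of_eventuallyEq (Filter.Eventually.of_forall hH)
    convert h2 using 1; ring
  have hud : HasDerivAt (fun x : ℝ => H x / N) (N / k / N) I := hHd.div_const N
  have hQc : HasDerivAt (fun x : ℝ => Q (H x / N)) (Q' u * (N / k / N)) I :=
    hQd.comp I hud
  have hintd : HasDerivAt (fun x : ℝ => ∫ γ in (0 : ℝ)..Q (H x / N), γ * f γ)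
      (q * f q * (Q' u * (N / k / N))) I := by
    have h := hFTC.comp I hQc
    exact h
  -- derivative of ε
  have hεd : HasDerivAt ε (k / (a ^ 2 * N)) I := by
    have hg : HasDerivAt (fun x : ℝ => (1 - x) * N) (-1 * N) I :=
      ((hasDerivAt_id I).const_sub 1).mul_const N
    have hne : (1 - I) * N ≠ 0 := by
      rw [← ha]; exact mul_ne_zero hane hNne
    have h2 := (hasDerivAt_const I k).div hg hne
    have h3 : HasDerivAt ε ((0 * ((1 - I) * N) - k * (-1 * N)) / ((1 - I) * N) ^ 2) I :=
      h2.congr_of_eventuallyEq (Filter.Eventually.of_forall hε)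
    convert h3 using 1
    rw [← ha]
    field_simp
    ring
  have hεI : ε I = k / (a * N) := by rw [hε I, ← ha]
  -- Lindahl derivative
  refine ⟨q / a + (q * u - B) * k / a ^ 2,
    Q' u * u / a + q / a + q * u * k / a ^ 2, ?_, ?_, ?_, ?_⟩
  · have h0 : HasDerivAt (fun x : ℝ => N * (∫ γ in (0 : ℝ)..Q (H x / N), γ * f γ) * ε x)
        ((N * (q * f q * (Q' u * (N / k / N)))) * ε I
          + (N * (∫ γ in (0 : ℝ)..q, γ * f γ)) * (k / (a ^ 2 * N))) I :=
      (hintd.const_mul N).mul hεd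
    have h1 : HasDerivAt CL
        ((N * (q * f q * (Q' u * (N / k / N)))) * ε I
          + (N * (∫ γ in (0 : ℝ)..q, γ * f γ)) * (k / (a ^ 2 * N))) I :=
      h0.congr_of_eventuallyEq (Filter.Eventually.of_forall hCL)
    convert h1 using 1
    rw [hAeq, hεI, show q * f q * (Q' u * (N / k / N)) = q * (f q * Q' u) * (N / k / N) by ring,
      hfq1]
    field_simp
  · have h0 : HasDerivAt (fun x : ℝ => Q (H x / N) * H x * ε x)
        ((Q' u * (N / k / N) * H I + q * (N / k)) * ε I + (q * H I) * (k / (a ^ 2 * N))) I :=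
      (hQc.mul hHd).mul hεd
    have h1 : HasDerivAt CVCG
        ((Q' u * (N / k / N) * H I + q * (N / k)) * ε I + (q * H I) * (k / (a ^ 2 * N))) I :=
      h0.congr_of_eventuallyEq (Filter.Eventually.of_forall hCVCG)
    convert h1 using 1
    rw [hHIu, hεI]
    field_simp
  · have h1 : 0 < q / a := div_pos hQpos hapos
    have h2 : 0 < (q * u - B) * k / a ^ 2 := by positivity
    linarith
  · have h1 : 0 < Q' u * u / a := by
      have := hQ'pos u hHI
      positivity
    have h2 : 0 < B * k / a ^ 2 := by positivity
    have hid : Q' u * u / a + q / a + q * u * k / a ^ 2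
        - (q / a + (q * u - B) * k / a ^ 2) = Q' u * u / a + B * k / a ^ 2 := by ring
    linarith
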